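/- Let t ∈ R, t ≠ 0, set μ = (it, it, −2it), let ℓ ∈ N₀ = {0,1,2,…}, and let u2 ∈ C with u2 − μi ∉ −N₀ for i = 1,2,3 and u2 − it − ℓ ∉ −N₀. Then the function u1 ↦ (u1 + it + ℓ)² F̃0((u1,u2), μ) extends holomorphically to a neighborhood of u1 = −it − ℓ (so F̃0 has a double pole there), and its residue, i.e. the derivative of this extension at u1 = −it − ℓ, equals (4/π⁴) cos⁰(μ) · (Π_{i=1}^{3} Γ(u2 − μi)) · (1/(ℓ!)²) · (Γ(−3it−ℓ)/Γ(u2−it−ℓ)) · (2H_ℓ − 2γ + ψ(−3it−ℓ) − ψ(u2−it−ℓ)), where H_ℓ = Σ_{j=1}^{ℓ} 1/j is the ℓ-th harmonic number, γ is the Euler–Mascheroni constant, and ψ = Γ'/Γ is the digamma function. -/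

import Mathlib

open scoped BigOperators Topology

/-- `cos⁰(μ) = (2/π) Π_{i<j} cos((π/2)(μi−μj))`. -/
noncomputable def cos0 (μ : Fin 3 → ℂ) : ℂ :=
  (2 / (Real.pi : ℂ)) *
    (Complex.cos ((Real.pi : ℂ) / 2 * (μ 0 - μ 1)) *
      Complex.cos ((Real.pi : ℂ) / 2 * (μ 0 - μ 2)) *
      Complex.cos ((Real.pi : ℂ) / 2 * (μ 1 - μ 2)))

/-- `F̃0(u,μ) = (4/π⁴) cos⁰(μ) (Π_i Γ(u1+μi) Γ(u2−μi)) / Γ(u1+u2)`. -/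
noncomputable def Ftilde0 (u1 u2 : ℂ) (μ : Fin 3 → ℂ) : ℂ :=
  (4 / (Real.pi : ℂ) ^ 4) * cos0 μ *
    (∏ i, Complex.Gamma (u1 + μ i) * Complex.Gamma (u2 - μ i)) /
    Complex.Gamma (u1 + u2)
/-- The digamma function `ψ = Γ'/Γ`. -/
noncomputable def digamma (z : ℂ) : ℂ := deriv Complex.Gamma z / Complex.Gamma z

namespace Ftilde0Residue

lemma eventually_diff_Gamma {c : ℂ} (hc : ∀ m : ℕ, c ≠ -m) :
    ∀ᶠ s in 𝓝 c, DifferentiableAt ℂ Complex.Gamma s := by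
  by_cases h : c ∈ Set.range ((↑) : ℤ → ℂ)
  · obtain ⟨n, rfl⟩ := h
    have hn : 0 < n := by
      by_contra hn
      push_neg at hn
      refine hc (-n).toNat ?_
      have h2 : (((-n).toNat : ℕ) : ℂ) = ((-n : ℤ) : ℂ) := by
        exact_mod_cast congrArg (fun k : ℤ => (k : ℂ)) (Int.toNat_of_nonneg (by omega : (0:ℤ) ≤ -n))
      rw [h2]
      push_cast
      ring
    have hopen : IsOpen {s : ℂ | 0 < s.re} := isOpen_lt continuous_const Complex.continuous_re
    have hmem : (n : ℂ) ∈ {s : ℂ | 0 < s.re} := by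
      simp only [Set.mem_setOf_eq, Complex.intCast_re]
      exact_mod_cast hn
    filter_upwards [hopen.eventually_mem hmem] with s hs
    refine Complex.differentiableAt_Gamma s fun m hm => ?_
    rw [hm] at hs
    simp only [Set.mem_setOf_eq, Complex.neg_re, Complex.natCast_re] at hs
    have : (0:ℝ) ≤ m := m.cast_nonneg
    linarith
  · have hopen : IsOpen (Set.range ((↑) : ℤ → ℂ))ᶜ :=
      Complex.isClosed_range_intCast.isOpen_compl
    filter_upwards [hopen.eventually_mem h] with s hs
    refine Complex.differentiableAt_Gamma s fun m hm => ?_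
    exact hs ⟨-m, by push_cast [hm]; ring⟩

lemma Gamma_shift (n : ℕ) (z : ℂ) (hz : ∀ j < n, z + j ≠ 0) :
    Complex.Gamma (z + n) = (∏ j ∈ Finset.range n, (z + j)) * Complex.Gamma z := by
  induction n with
  | zero => simp
  | succ n ih =>
    have h1 : z + ((n:ℕ)+1 : ℕ) = (z + n) + 1 := by push_cast; ring
    rw [h1, Complex.Gamma_add_one _ (hz n (by omega)), Finset.prod_range_succ,
      ih (fun j hj => hz j (by omega))]
    ring

lemma prod_shift (n : ℕ) :
    ∏ j ∈ Finset.range n, ((j:ℂ) - n) = (-1)^n * (Nat.factorial n : ℂ) := by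
  rw [← Finset.prod_range_reflect]
  have : ∀ j ∈ Finset.range n, ((n - 1 - j : ℕ) : ℂ) - n = -((j:ℂ)+1) := by
    intro j hj
    rw [Finset.mem_range] at hj
    have h1 : (n - 1 - j : ℕ) = n - (j+1) := by omega
    rw [h1, Nat.cast_sub (by omega)]
    push_cast
    ring
  rw [Finset.prod_congr rfl this]
  have h2 : ∀ j ∈ Finset.range n, -((j:ℂ)+1) = (-1) * ((j:ℂ)+1) := fun j _ => by ring
  rw [Finset.prod_congr rfl h2, Finset.prod_mul_distrib, Finset.prod_const,
    Finset.card_range]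
  have h3 : ∏ j ∈ Finset.range n, ((j:ℂ)+1) = (Nat.factorial n : ℂ) := by
    rw [← Finset.prod_range_add_one_eq_factorial n]
    push_cast
    rfl
  rw [h3]

lemma sum_shift (n : ℕ) :
    ∑ k ∈ Finset.range n, ((k:ℂ) - n)⁻¹ = -∑ j ∈ Finset.range n, (1:ℂ)/((j:ℂ)+1) := by
  rw [← Finset.sum_range_reflect]
  rw [← Finset.sum_neg_distrib]
  refine Finset.sum_congr rfl fun j hj => ?_
  rw [Finset.mem_range] at hj
  have h1 : (n - 1 - j : ℕ) = n - (j+1) := by omega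
  have h2 : ((n - 1 - j : ℕ) : ℂ) - n = -((j:ℂ)+1) := by
    rw [h1, Nat.cast_sub (by omega)]
    push_cast
    ring
  rw [h2, inv_neg, one_div]

lemma aux (a b u2 C : ℂ) (ℓ : ℕ)
    (hx : ∀ m : ℕ, -a - ℓ + b ≠ -(m:ℂ))
    (hw : ∀ m : ℕ, -a - ℓ + u2 ≠ -(m:ℂ)) :
    ∃ h : ℂ → ℂ, AnalyticAt ℂ h (-a - ℓ) ∧
      (∀ᶠ u1 in 𝓝[≠] (-a - ℓ),
        h u1 = (u1 + a + ℓ)^2 *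
          (C * ((Complex.Gamma (u1+a))^2 * Complex.Gamma (u1+b)) / Complex.Gamma (u1+u2))) ∧
      deriv h (-a - ℓ) = C * (1/(Nat.factorial ℓ : ℂ)^2) *
        (Complex.Gamma (-a-ℓ+b) / Complex.Gamma (-a-ℓ+u2)) *
        (2 * (∑ j ∈ Finset.range ℓ, (1:ℂ)/((j:ℂ)+1))
          - 2 * (Real.eulerMascheroniConstant : ℂ)
          + digamma (-a-ℓ+b) - digamma (-a-ℓ+u2)) := by
  set γc : ℂ := (Real.eulerMascheroniConstant : ℂ) with hγc
  set p : ℂ := -a - ℓ with hp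
  set D : ℂ → ℂ := fun u1 => ∏ j ∈ Finset.range ℓ, (u1 + a + j) with hD
  set N : ℂ → ℂ := fun u1 => Complex.Gamma (u1 + (a + ℓ + 1)) with hN
  have hD0 : D p = (-1)^ℓ * (Nat.factorial ℓ : ℂ) := by
    rw [hD]
    calc ∏ j ∈ Finset.range ℓ, (p + a + j) = ∏ j ∈ Finset.range ℓ, ((j:ℂ) - ℓ) :=
          Finset.prod_congr rfl fun j _ => by rw [hp]; ring
    _ = (-1)^ℓ * (Nat.factorial ℓ : ℂ) := prod_shift ℓ
  have hfacne : (Nat.factorial ℓ : ℂ) ≠ 0 := Nat.cast_ne_zero.mpr ℓ.factorial_ne_zero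
  have hD0ne : D p ≠ 0 := by
    rw [hD0]
    exact mul_ne_zero (pow_ne_zero _ (by norm_num)) hfacne
  have hD0sq : (D p)^2 = (Nat.factorial ℓ : ℂ)^2 := by
    rw [hD0, mul_pow, ← pow_mul, mul_comm ℓ 2, pow_mul]
    norm_num
  have hNp : N p = 1 := by
    show Complex.Gamma (p + (a + ℓ + 1)) = 1
    have h1 : p + (a + ℓ + 1) = 1 := by rw [hp]; ring
    rw [h1, Complex.Gamma_one]
  have hDdiff : ∀ u : ℂ, HasDerivAt D
      (∑ i ∈ Finset.range ℓ, (∏ j ∈ (Finset.range ℓ).erase i, (u + a + j)) • (1:ℂ)) u :=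
    fun u => HasDerivAt.fun_finsetProd fun i _ => ((hasDerivAt_id u).add_const a).add_const (i:ℂ)
  have hGwne : Complex.Gamma (p + u2) ≠ 0 := Complex.Gamma_ne_zero hw
  have hGxne : Complex.Gamma (p + b) ≠ 0 := Complex.Gamma_ne_zero hx
  have h1c : ∀ m : ℕ, (1:ℂ) ≠ -(m:ℂ) := by
    intro m hm
    have := congrArg Complex.re hm
    simp only [Complex.one_re, Complex.neg_re, Complex.natCast_re] at this
    have h0 : (0:ℝ) ≤ m := m.cast_nonneg
    linarith
  refine ⟨fun u1 => C * (N u1 / D u1)^2 * Complex.Gamma (u1 + b) *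
      (Complex.Gamma (u1 + u2))⁻¹, ?_, ?_, ?_⟩
  · -- analyticity
    rw [Complex.analyticAt_iff_eventually_differentiableAt]
    have t1 : Filter.Tendsto (fun u1 : ℂ => u1 + (a + ℓ + 1)) (𝓝 p) (𝓝 1) :=
      (continuous_id.add continuous_const).tendsto' p 1
        (by show p + (a + ℓ + 1) = 1; rw [hp]; ring)
    have e1 := t1.eventually (eventually_diff_Gamma h1c)
    have t3 : Filter.Tendsto (fun u1 : ℂ => u1 + b) (𝓝 p) (𝓝 (p + b)) :=
      (continuous_id.add continuous_const).tendsto' p (p + b) rfl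
    have e3 := t3.eventually (eventually_diff_Gamma hx)
    have hDC : Continuous D := by
      rw [hD]
      exact continuous_finset_prod _ fun i _ => (continuous_id.add continuous_const).add
        continuous_const
    have eD := hDC.continuousAt.eventually_ne hD0ne
    filter_upwards [e1, e3, eD] with u1 h1 h3 hDne
    have d1 : DifferentiableAt ℂ N u1 := h1.comp u1 (differentiableAt_id.add_const (a + ℓ + 1))
    have d3 : DifferentiableAt ℂ (fun u : ℂ => Complex.Gamma (u + b)) u1 :=
      h3.comp u1 (differentiableAt_id.add_const b)
    have d4 : DifferentiableAt ℂ (fun u : ℂ => (Complex.Gamma (u + u2))⁻¹) u1 :=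
      (Complex.differentiable_one_div_Gamma.comp (differentiable_id.add_const u2)).differentiableAt
    exact ((((d1.div (hDdiff u1).differentiableAt hDne).pow 2).const_mul C).mul d3).mul d4
  · -- eventual equality
    have hmem : ∀ᶠ u1 in 𝓝[≠] p, u1 ∈ Metric.ball p 1 ∧ u1 ≠ p := by
      filter_upwards [self_mem_nhdsWithin,
        mem_nhdsWithin_of_mem_nhds (Metric.ball_mem_nhds p one_pos)] with u1 h1 h2
      exact ⟨h2, h1⟩
    filter_upwards [hmem] with u1 hu1
    obtain ⟨hball, hne⟩ := hu1
    have hz : ∀ j < ℓ + 1, (u1 + a) + (j:ℂ) ≠ 0 := by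
      intro j hj h0
      rcases eq_or_lt_of_le (Nat.lt_succ_iff.mp hj) with hjeq | hjlt
      · apply hne
        rw [hp, ← hjeq]
        linear_combination h0
      · have h4 : u1 - p = ((ℓ - j : ℕ) : ℂ) := by
          rw [hp, Nat.cast_sub (le_of_lt hjlt)]
          linear_combination h0
        have h5 : dist u1 p < 1 := Metric.mem_ball.mp hball
        rw [Complex.dist_eq, h4, Complex.norm_natCast] at h5
        have h6 : (1:ℝ) ≤ ((ℓ - j : ℕ):ℝ) := by
          exact_mod_cast Nat.one_le_iff_ne_zero.mpr (by omega)
        linarith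
    have hprod_ne : D u1 ≠ 0 := by
      rw [hD]
      refine Finset.prod_ne_zero_iff.mpr fun j hj => ?_
      rw [Finset.mem_range] at hj
      exact hz j (by omega)
    have hgamma : N u1 = D u1 * ((u1 + a + ℓ) * Complex.Gamma (u1 + a)) := by
      show Complex.Gamma (u1 + (a + ℓ + 1))
        = (∏ j ∈ Finset.range ℓ, (u1 + a + j)) * ((u1 + a + ℓ) * Complex.Gamma (u1 + a))
      have h6 : u1 + (a + ℓ + 1) = (u1 + a) + ((ℓ + 1 : ℕ):ℂ) := by push_cast; ring
      rw [h6, Gamma_shift (ℓ+1) (u1+a) hz, Finset.prod_range_succ]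
      ring
    have h7 : N u1 / D u1 = (u1 + a + ℓ) * Complex.Gamma (u1 + a) := by
      rw [hgamma]
      exact mul_div_cancel_left₀ _ hprod_ne
    rw [h7]
    ring
  · -- derivative value
    have hpt : p + (a + ℓ + 1) = 1 := by rw [hp]; ring
    have hg1 : HasDerivAt Complex.Gamma (-γc) (p + (a + ℓ + 1)) := by
      rw [hpt, hγc]
      exact Complex.hasDerivAt_Gamma_one
    have hNd : HasDerivAt N (-γc) p := by
      have := hg1.comp p ((hasDerivAt_id p).add_const (a + ℓ + 1))
      simpa [Function.comp_def] using this
    have hDd := hDdiff p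
    have hq := hNd.div hDd hD0ne
    have h3d : HasDerivAt (fun u : ℂ => Complex.Gamma (u + b)) (deriv Complex.Gamma (p + b)) p := by
      have := ((Complex.differentiableAt_Gamma _ hx).hasDerivAt.comp p
        ((hasDerivAt_id p).add_const b))
      simpa [Function.comp_def] using this
    have h4d : HasDerivAt (fun u : ℂ => (Complex.Gamma (u + u2))⁻¹)
        (-(deriv Complex.Gamma (p + u2)) / (Complex.Gamma (p + u2))^2) p := by
      have h0 : HasDerivAt (fun u : ℂ => Complex.Gamma (u + u2))
          (deriv Complex.Gamma (p + u2)) p := by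
        have := ((Complex.differentiableAt_Gamma _ hw).hasDerivAt.comp p
          ((hasDerivAt_id p).add_const u2))
        simpa [Function.comp_def] using this
      exact h0.inv hGwne
    -- substitute values
    have hDsum : (∑ i ∈ Finset.range ℓ,
        (∏ j ∈ (Finset.range ℓ).erase i, (p + a + j)) • (1:ℂ)) = -(D p) *
        (∑ j ∈ Finset.range ℓ, (1:ℂ)/((j:ℂ)+1)) := by
      have step : ∀ i ∈ Finset.range ℓ,
          (∏ j ∈ (Finset.range ℓ).erase i, (p + a + j)) • (1:ℂ)
            = D p * ((i:ℂ) - ℓ)⁻¹ := by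
        intro i hi
        rw [Finset.mem_range] at hi
        have hie : ((i:ℂ) - ℓ) ≠ 0 := by
          rw [sub_ne_zero]
          exact_mod_cast Nat.ne_of_lt hi
        have hcong : ∏ j ∈ (Finset.range ℓ).erase i, (p + a + j)
            = ∏ j ∈ (Finset.range ℓ).erase i, ((j:ℂ) - ℓ) :=
          Finset.prod_congr rfl fun j _ => by rw [hp]; ring
        have hkey := Finset.prod_erase_mul (Finset.range ℓ) (fun j => ((j:ℂ) - ℓ))
          (Finset.mem_range.mpr hi)
        have hDval : D p = ∏ j ∈ Finset.range ℓ, ((j:ℂ) - ℓ) := by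
          rw [hD]
          exact Finset.prod_congr rfl fun j _ => by rw [hp]; ring
        rw [smul_eq_mul, mul_one, hcong, hDval, ← hkey, mul_assoc,
          mul_inv_cancel₀ hie, mul_one]
      rw [Finset.sum_congr rfl step, ← Finset.mul_sum, sum_shift]
      ring
    rw [hDsum] at hq
    have total := (((hq.pow 2).const_mul C).mul h3d).mul h4d
    rw [show deriv (fun u1 => C * (N u1 / D u1)^2 * Complex.Gamma (u1 + b) *
        (Complex.Gamma (u1 + u2))⁻¹) p = _ from total.deriv, Pi.mul_apply,
      Pi.pow_apply, Pi.div_apply, hNp]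
    simp only [digamma]
    set Hs : ℂ := ∑ j ∈ Finset.range ℓ, (1:ℂ)/((j:ℂ)+1) with hHs
    have e2 : ((1:ℂ)/(D p))^2 = 1/(Nat.factorial ℓ : ℂ)^2 := by
      rw [div_pow, one_pow, hD0sq]
    have e1 : ((2:ℕ):ℂ) * ((1:ℂ)/(D p))^(2-1) * ((-γc * D p - 1 * (-(D p) * Hs))/(D p)^2)
        = (2*Hs - 2*γc) * (1/(Nat.factorial ℓ : ℂ)^2) := by
      rw [← hD0sq]
      field_simp
      ring_nf
      rw [mul_inv_cancel₀ hD0ne]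
      ring
    rw [e1, e2]
    field_simp
    ring

end Ftilde0Residue

/-- The residue of `F̃0` at the double pole `u1 = −it − ℓ` for `μ = (it,it,−2it)`:
there is a holomorphic extension `h` of `u1 ↦ (u1+it+ℓ)² F̃0((u1,u2),μ)` near `u1 = −it−ℓ`,
and the residue `h'(−it−ℓ)` is given explicitly. -/
theorem ftilde0_residue_double_pole (t : ℝ) (ht : t ≠ 0) (ℓ : ℕ) (u2 : ℂ)
    (hu2a : ∀ k : ℕ, u2 - Complex.I * (t : ℂ) ≠ -(k : ℂ))
    (hu2b : ∀ k : ℕ, u2 + 2 * Complex.I * (t : ℂ) ≠ -(k : ℂ))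
    (hu2c : ∀ k : ℕ, u2 - Complex.I * (t : ℂ) - (ℓ : ℂ) ≠ -(k : ℂ)) :
    ∃ h : ℂ → ℂ, AnalyticAt ℂ h (-(Complex.I * (t : ℂ)) - (ℓ : ℂ)) ∧
      (∀ᶠ u1 in 𝓝[≠] (-(Complex.I * (t : ℂ)) - (ℓ : ℂ)),
        h u1 = (u1 + Complex.I * (t : ℂ) + (ℓ : ℂ)) ^ 2 *
          Ftilde0 u1 u2
            ![Complex.I * (t : ℂ), Complex.I * (t : ℂ), -2 * Complex.I * (t : ℂ)]) ∧
      deriv h (-(Complex.I * (t : ℂ)) - (ℓ : ℂ))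
        = (4 / (Real.pi : ℂ) ^ 4) *
            cos0 ![Complex.I * (t : ℂ), Complex.I * (t : ℂ), -2 * Complex.I * (t : ℂ)] *
            (∏ i, Complex.Gamma (u2 -
              ![Complex.I * (t : ℂ), Complex.I * (t : ℂ), -2 * Complex.I * (t : ℂ)] i)) *
            (1 / ((Nat.factorial ℓ : ℂ)) ^ 2) *
            (Complex.Gamma (-3 * Complex.I * (t : ℂ) - (ℓ : ℂ)) /
              Complex.Gamma (u2 - Complex.I * (t : ℂ) - (ℓ : ℂ))) *
            (2 * (∑ j ∈ Finset.range ℓ, (1 : ℂ) / ((j : ℂ) + 1))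
              - 2 * (Real.eulerMascheroniConstant : ℂ)
              + digamma (-3 * Complex.I * (t : ℂ) - (ℓ : ℂ))
              - digamma (u2 - Complex.I * (t : ℂ) - (ℓ : ℂ))) := by
  classical
  set μ : Fin 3 → ℂ := ![Complex.I * (t : ℂ), Complex.I * (t : ℂ), -2 * Complex.I * (t : ℂ)]
    with hμ
  obtain ⟨h, h_an, h_ev, h_der⟩ := Ftilde0Residue.aux (Complex.I * (t : ℂ))
    (-2 * Complex.I * (t : ℂ)) u2
    ((4 / (Real.pi : ℂ) ^ 4) * cos0 μ * (∏ i, Complex.Gamma (u2 - μ i))) ℓ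
    (by
      intro m hm
      apply ht
      have h2 := congrArg Complex.im hm
      simp [Complex.add_im, Complex.sub_im, Complex.neg_im, Complex.mul_im, Complex.mul_re,
        Complex.I_re, Complex.I_im, Complex.ofReal_re, Complex.ofReal_im,
        Complex.natCast_im] at h2
      linarith)
    (by
      intro m hm
      exact hu2c m (by linear_combination hm))
  refine ⟨h, h_an, ?_, ?_⟩
  · filter_upwards [h_ev] with u1 hu1
    rw [hu1]
    simp only [Ftilde0, hμ, Fin.prod_univ_three, Matrix.cons_val_zero, Matrix.cons_val_one,
      Matrix.head_cons, Matrix.cons_val_two, Matrix.tail_cons]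
    ring
  · have e1 : -(Complex.I * (t : ℂ)) - (ℓ : ℂ) + (-2 * Complex.I * (t : ℂ))
        = -3 * Complex.I * (t : ℂ) - (ℓ : ℂ) := by ring
    have e2 : -(Complex.I * (t : ℂ)) - (ℓ : ℂ) + u2
        = u2 - Complex.I * (t : ℂ) - (ℓ : ℂ) := by ring
    rw [h_der, e1, e2]
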